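/- Let λ be a compatible ◊₁-cone with vertex a commutative unital quantale (H, *, u). Then for every object C of 𝒞 and all a ∈ F(C), b₁, b₂ ∈ F'(C): (1) λ_C(a, b₁) * λ_C(a, b₂) = (b₁ = b₂) • λ_C(a, b₁); and (2) u = ⨆ x : F'(C), λ_C(a, x). -/

import Mathlib

open CategoryTheory CategoryTheory.Limits

universe v u w

lemma aux_pair_bij {C : Type u} [Category.{v} C] [HasBinaryProducts C]
    (G : C ⥤ Type w) [PreservesFiniteProducts G] (X Y : C) :
    Function.Bijective (fun z : G.obj (X ⨯ Y) =>
      (G.map Limits.prod.fst z, G.map Limits.prod.snd z)) := by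
  have : Function.Bijective ((Types.binaryProductIso (G.obj X) (G.obj Y)).hom ∘
      (prodComparison G X Y)) := by
    apply Function.Bijective.comp
    · rw [← isIso_iff_bijective]; infer_instance
    · rw [← isIso_iff_bijective]; infer_instance
  convert this using 1
  funext z
  have h1 := types_congr_hom (Types.binaryProductIso_hom_comp_fst (G.obj X) (G.obj Y))
    (prodComparison G X Y z)
  have h2 := types_congr_hom (Types.binaryProductIso_hom_comp_snd (G.obj X) (G.obj Y))
    (prodComparison G X Y z)
  have p1 := types_congr_hom (prodComparison_fst G X Y) z
  have p2 := types_congr_hom (prodComparison_snd G X Y) z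
  simp only [types_comp_apply] at h1 h2 p1 p2
  ext <;> simp_all

lemma aux_term {C : Type u} [Category.{v} C] [HasTerminal C]
    (G : C ⥤ Type w) [PreservesFiniteProducts G] :
    Nonempty (G.obj (⊤_ C)) ∧ Subsingleton (G.obj (⊤_ C)) := by
  have e : G.obj (⊤_ C) ≃ PUnit :=
    (PreservesTerminal.iso G ≪≫ Types.terminalIso).toEquiv
  exact ⟨⟨e.symm PUnit.unit⟩, e.subsingleton⟩

/-- Let `λ` be a compatible `◊₁`-cone with vertex a commutative unital quantale
`(H, *, 1)`.  Then for every object `C` of `𝒞`, `a ∈ F(C)` and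
`b₁, b₂ ∈ F'(C)`: (1) `λ_C(a, b₁) * λ_C(a, b₂) = (b₁ = b₂) • λ_C(a, b₁)`, and
(2) `1 = ⨆ x, λ_C(a, x)`. -/
theorem compatible_diamond₁_cone_key_equations
    {H : Type w} [CompleteLattice H] [CommMonoid H]
    (mul_sSup : ∀ (a : H) (s : Set H), a * sSup s = ⨆ b ∈ s, a * b)
    (sSup_mul : ∀ (s : Set H) (a : H), sSup s * a = ⨆ b ∈ s, b * a)
    {C : Type u} [Category.{v} C] [HasTerminal C] [HasBinaryProducts C]
    (F F' : C ⥤ Type w)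
    [PreservesFiniteProducts F] [PreservesFiniteProducts F']
    (lam : ∀ X : C, F.obj X → F'.obj X → H)
    -- ◊₁-cone
    (hdiam₁ : ∀ {X Y : C} (f : X ⟶ Y) (a : F.obj X) (b' : F'.obj Y),
      lam Y (F.map f a) b' = ⨆ y : F'.obj X, ⨆ (_ : F'.map f y = b'), lam X a y)
    -- compatibility (C1)
    (hC1 : ∀ (X Y : C) (z : F.obj (X ⨯ Y)) (z' : F'.obj (X ⨯ Y)),
      lam (X ⨯ Y) z z' =
        lam X (F.map Limits.prod.fst z) (F'.map Limits.prod.fst z') *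
          lam Y (F.map Limits.prod.snd z) (F'.map Limits.prod.snd z'))
    -- compatibility (C2)
    (hC2 : ∀ (z : F.obj (⊤_ C)) (z' : F'.obj (⊤_ C)), lam (⊤_ C) z z' = 1) :
    (∀ (X : C) (a : F.obj X) (b₁ b₂ : F'.obj X),
      lam X a b₁ * lam X a b₂ = ⨆ (_ : b₁ = b₂), lam X a b₁) ∧
    (∀ (X : C) (a : F.obj X), (1 : H) = ⨆ x : F'.obj X, lam X a x) := by
  constructor
  · intro X a b₁ b₂
    obtain ⟨z', hz'⟩ := (aux_pair_bij F' X X).2 (b₁, b₂)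
    have hb1 : F'.map Limits.prod.fst z' = b₁ := congrArg Prod.fst hz'
    have hb2 : F'.map Limits.prod.snd z' = b₂ := congrArg Prod.snd hz'
    set δ : X ⟶ X ⨯ X := Limits.prod.lift (𝟙 X) (𝟙 X) with hδ
    have hfst : δ ≫ Limits.prod.fst = 𝟙 X := Limits.prod.lift_fst _ _
    have hsnd : δ ≫ Limits.prod.snd = 𝟙 X := Limits.prod.lift_snd _ _
    have hFa1 : F.map Limits.prod.fst (F.map δ a) = a := by
      rw [← types_comp_apply (F.map δ) (F.map Limits.prod.fst), ← F.map_comp, hfst,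
        F.map_id, types_id_apply]
    have hFa2 : F.map Limits.prod.snd (F.map δ a) = a := by
      rw [← types_comp_apply (F.map δ) (F.map Limits.prod.snd), ← F.map_comp, hsnd,
        F.map_id, types_id_apply]
    have eδ1 : ∀ y : F'.obj X, F'.map Limits.prod.fst (F'.map δ y) = y := by
      intro y
      rw [← types_comp_apply (F'.map δ) (F'.map Limits.prod.fst), ← F'.map_comp, hfst,
        F'.map_id, types_id_apply]
    have eδ2 : ∀ y : F'.obj X, F'.map Limits.prod.snd (F'.map δ y) = y := by
      intro y
      rw [← types_comp_apply (F'.map δ) (F'.map Limits.prod.snd), ← F'.map_comp, hsnd,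
        F'.map_id, types_id_apply]
    have key := hdiam₁ δ a z'
    rw [hC1 X X (F.map δ a) z', hFa1, hFa2, hb1, hb2] at key
    rw [key]
    have hcond : ∀ y : F'.obj X, (F'.map δ y = z') ↔ (y = b₁ ∧ b₁ = b₂) := by
      intro y
      constructor
      · intro h
        have h1 : y = b₁ := by rw [← eδ1 y, h, hb1]
        have h2 : y = b₂ := by rw [← eδ2 y, h, hb2]
        exact ⟨h1, h1 ▸ h2⟩
      · rintro ⟨rfl, he⟩
        apply (aux_pair_bij F' X X).1
        simp only [eδ1, eδ2, hb1, hb2, he, Prod.mk.injEq]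
    calc (⨆ y : F'.obj X, ⨆ (_ : F'.map δ y = z'), lam X a y)
        = ⨆ y : F'.obj X, ⨆ (_ : y = b₁ ∧ b₁ = b₂), lam X a y := by
          exact iSup_congr fun y => by rw [hcond y]
      _ = ⨆ (_ : b₁ = b₂), lam X a b₁ := by
          apply le_antisymm
          · refine iSup_le fun y => iSup_le fun h => ?_
            obtain ⟨rfl, h2⟩ := h
            exact le_iSup_of_le h2 le_rfl
          · exact iSup_le fun h => le_iSup_of_le b₁ (le_iSup_of_le ⟨rfl, h⟩ le_rfl)
  · intro X a
    obtain ⟨⟨b'⟩, hsub⟩ := aux_term F'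
    calc (1 : H) = lam (⊤_ C) (F.map (terminal.from X) a) b' := (hC2 _ _).symm
      _ = ⨆ y : F'.obj X, ⨆ (_ : F'.map (terminal.from X) y = b'), lam X a y :=
          hdiam₁ _ a b'
      _ = ⨆ x : F'.obj X, lam X a x :=
          iSup_congr fun y => iSup_pos (Subsingleton.elim _ _)
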